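/- If X is a finite nonempty set and H is a hierarchy on X that does not contain the empty set, then |H| ≤ 2|X|. -/

import Mathlib

lemma laminar_card_bound {X : Type*} [DecidableEq X] (S : Finset X) :
    ∀ H : Finset (Finset X),
    (∀ A ∈ H, A ⊆ S) →
    (∀ A ∈ H, ∀ B ∈ H, A ∩ B = ∅ ∨ A ∩ B = A ∨ A ∩ B = B) →
    ∅ ∉ H → H.card ≤ 2 * S.card - 1 := by
  induction S using Finset.strongInduction with
  | _ S IH =>
    intro H hsub hlam hempty
    by_cases hall : ∀ A ∈ H, A = S
    · have hH1 : H ⊆ {S} := fun A hA => Finset.mem_singleton.mpr (hall A hA)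
      have h1 := Finset.card_le_card hH1
      simp only [Finset.card_singleton] at h1
      rcases H.eq_empty_or_nonempty with h | ⟨A, hA⟩
      · simp [h]
      · have hAS := hall A hA
        have hAne : A.Nonempty :=
          Finset.nonempty_iff_ne_empty.mpr (fun h => hempty (h ▸ hA))
        have := Finset.card_pos.mpr hAne
        have : A.card ≤ S.card := Finset.card_le_card (hsub A hA)
        omega
    · push_neg at hall
      obtain ⟨A₀, hA₀H, hA₀ne⟩ := hall
      set T : Finset (Finset X) := H.filter (· ≠ S) with hT
      have hTne : T.Nonempty := ⟨A₀, by simp [hT, hA₀H, hA₀ne]⟩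
      obtain ⟨A, hAT, hAmax⟩ := T.exists_maximal hTne
      have hAH : A ∈ H := (Finset.mem_filter.mp hAT).1
      have hAneS : A ≠ S := (Finset.mem_filter.mp hAT).2
      have hAS : A ⊆ S := hsub A hAH
      have hAnonempty : A.Nonempty :=
        Finset.nonempty_iff_ne_empty.mpr (fun h => hempty (h ▸ hAH))
      set H₁ : Finset (Finset X) := H.filter (· ⊆ A) with hH₁
      set H₂ : Finset (Finset X) := H.filter (fun B => B ∩ A = ∅) with hH₂
      have hcover : H ⊆ H₁ ∪ H₂ ∪ {S} := by
        intro B hB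
        rcases hlam B hB A hAH with h | h | h
        · exact Finset.mem_union_left _ (Finset.mem_union_right _
            (Finset.mem_filter.mpr ⟨hB, h⟩))
        · have : B ⊆ A := by rw [← h]; exact Finset.inter_subset_right
          exact Finset.mem_union_left _ (Finset.mem_union_left _
            (Finset.mem_filter.mpr ⟨hB, this⟩))
        · have hAB : A ⊆ B := by rw [← h]; exact Finset.inter_subset_left
          by_cases hBA : B = A
          · exact Finset.mem_union_left _ (Finset.mem_union_left _
              (Finset.mem_filter.mpr ⟨hB, hBA ▸ Finset.Subset.refl _⟩))
          · by_cases hBS : B = S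
            · exact Finset.mem_union_right _ (by simp [hBS])
            · exfalso
              exact hBA (le_antisymm (hAmax (Finset.mem_filter.mpr ⟨hB, hBS⟩) hAB) hAB)
      have hcard : H.card ≤ H₁.card + H₂.card + 1 := by
        calc H.card ≤ (H₁ ∪ H₂ ∪ {S}).card := Finset.card_le_card hcover
          _ ≤ (H₁ ∪ H₂).card + ({S} : Finset (Finset X)).card :=
              Finset.card_union_le _ _
          _ ≤ H₁.card + H₂.card + 1 := by
              have := Finset.card_union_le H₁ H₂
              simp only [Finset.card_singleton]
              omega
      -- apply IH to H₁ on A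
      have hA_ssub : A ⊂ S := Finset.ssubset_iff_subset_ne.mpr ⟨hAS, hAneS⟩
      have ih1 : H₁.card ≤ 2 * A.card - 1 := by
        apply IH A hA_ssub
        · intro B hB; exact (Finset.mem_filter.mp hB).2
        · intro B hB C hC
          exact hlam B (Finset.mem_filter.mp hB).1 C (Finset.mem_filter.mp hC).1
        · intro h; exact hempty (Finset.mem_filter.mp h).1
      -- apply IH to H₂ on S \ A
      have hSA_ssub : S \ A ⊂ S := by
        apply Finset.sdiff_ssubset hAS hAnonempty
      have ih2 : H₂.card ≤ 2 * (S \ A).card - 1 := by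
        apply IH (S \ A) hSA_ssub
        · intro B hB
          have hBH := (Finset.mem_filter.mp hB).1
          have hBA := (Finset.mem_filter.mp hB).2
          intro x hx
          refine Finset.mem_sdiff.mpr ⟨hsub B hBH hx, fun hxA => ?_⟩
          have : x ∈ B ∩ A := Finset.mem_inter.mpr ⟨hx, hxA⟩
          rw [hBA] at this
          exact Finset.notMem_empty x this
        · intro B hB C hC
          exact hlam B (Finset.mem_filter.mp hB).1 C (Finset.mem_filter.mp hC).1
        · intro h; exact hempty (Finset.mem_filter.mp h).1
      have hcardSA : (S \ A).card = S.card - A.card := Finset.card_sdiff_of_subset hAS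
      have hAcard : 1 ≤ A.card := Finset.card_pos.mpr hAnonempty
      have hAltS : A.card < S.card := Finset.card_lt_card hA_ssub
      omega

/-- If X is a finite nonempty set and H is a hierarchy on X that does
not contain the empty set, then |H| ≤ 2|X|. -/
theorem hierarchy_card_bound {X : Type*} [Fintype X] [DecidableEq X]
    (hX : Nonempty X) (H : Finset (Finset X))
    (hH : ∀ A ∈ H, ∀ B ∈ H, A ∩ B = ∅ ∨ A ∩ B = A ∨ A ∩ B = B)
    (hempty : ∅ ∉ H) :
    H.card ≤ 2 * Fintype.card X := by
  have := laminar_card_bound (Finset.univ : Finset X) H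
    (fun A _ => Finset.subset_univ A) hH hempty
  simp only [Finset.card_univ] at this
  omega
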